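/- Let 0 < p ≤ q ≤ 1, let s be a positive integer, and let σ ∈ ℝ^N be a vector with nonincreasing nonnegative entries σ_1 ≥ σ_2 ≥ ⋯ ≥ σ_N ≥ 0. Partition the index set {r+1, ..., N} into consecutive blocks T_1, T_2, ..., T_J each of size s (the last possibly smaller). Then ∑_{j≥2} ‖σ_{T_j}‖_2^q ≤ s^{-(1/p - 1/2)q} (∑_{i=r+1}^{N} σ_i^p)^{q/p}. -/

import Mathlib

open scoped BigOperators

private def blk (N r s j : ℕ) : Finset (Fin N) :=
  Finset.univ.filter (fun i : Fin N => r + (j - 1) * s ≤ (i : ℕ) ∧ (i : ℕ) < r + j * s)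

private lemma card_filter_Ico (N a b : ℕ) (hbN : b ≤ N) :
    (Finset.univ.filter (fun i : Fin N => a ≤ (i : ℕ) ∧ (i : ℕ) < b)).card = b - a := by
  have h : (Finset.univ.filter (fun i : Fin N => a ≤ (i : ℕ) ∧ (i : ℕ) < b))
      = Finset.attachFin (Finset.Ico a b)
          (fun m hm => lt_of_lt_of_le (Finset.mem_Ico.1 hm).2 hbN) := by
    ext i
    simp [Finset.mem_attachFin, Finset.mem_Ico]
  rw [h, Finset.card_attachFin, Nat.card_Ico]

private lemma blk_card_le (N r s j : ℕ) (hj : 1 ≤ j) : (blk N r s j).card ≤ s := by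
  calc (blk N r s j).card ≤ (Finset.Ico (r + (j-1)*s) (r + j*s)).card := by
        refine Finset.card_le_card_of_injOn (f := fun i => (i : ℕ)) ?_ ?_
        · intro i hi
          simp only [blk, Finset.mem_coe, Finset.mem_filter, Finset.mem_univ, true_and] at hi
          exact Finset.mem_Ico.2 hi
        · exact Fin.val_injective.injOn
    _ ≤ s := by
        rw [Nat.card_Ico]
        obtain ⟨k, rfl⟩ : ∃ k, j = k + 1 := ⟨j - 1, by omega⟩
        have h1 : (k+1)*s = k*s + s := by ring
        simp only [Nat.add_sub_cancel]
        omega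

private lemma sum_rpow_le {ι : Type*} (s : Finset ι) (a : ι → ℝ)
    (ha : ∀ j ∈ s, 0 ≤ a j) (t : ℝ) (ht : 1 ≤ t) :
    ∑ j ∈ s, a j ^ t ≤ (∑ j ∈ s, a j) ^ t := by
  have ht0 : 0 < t := lt_of_lt_of_le one_pos ht
  have hS : 0 ≤ ∑ j ∈ s, a j := Finset.sum_nonneg ha
  have key : ∀ j ∈ s, a j ^ t ≤ a j * (∑ k ∈ s, a k) ^ (t - 1) := by
    intro j hj
    rcases eq_or_lt_of_le (ha j hj) with h0 | hpos
    · rw [← h0, Real.zero_rpow (ne_of_gt ht0), zero_mul]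
    · have hle : a j ≤ ∑ k ∈ s, a k := Finset.single_le_sum ha hj
      calc a j ^ t = a j ^ ((1:ℝ) + (t-1)) := by ring_nf
        _ = a j ^ (1:ℝ) * a j ^ (t-1) := Real.rpow_add hpos 1 (t-1)
        _ = a j * a j ^ (t-1) := by rw [Real.rpow_one]
        _ ≤ a j * (∑ k ∈ s, a k) ^ (t-1) := by
            apply mul_le_mul_of_nonneg_left _ hpos.le
            exact Real.rpow_le_rpow hpos.le hle (by linarith)
  calc ∑ j ∈ s, a j ^ t ≤ ∑ j ∈ s, a j * (∑ k ∈ s, a k) ^ (t-1) := Finset.sum_le_sum key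
    _ = (∑ j ∈ s, a j) * (∑ k ∈ s, a k) ^ (t-1) := by rw [← Finset.sum_mul]
    _ = (∑ j ∈ s, a j) ^ t := by
        rcases eq_or_lt_of_le hS with h0 | hpos
        · rw [← h0, zero_mul, Real.zero_rpow (ne_of_gt ht0)]
        · nth_rewrite 1 [← Real.rpow_one (∑ j ∈ s, a j)]
          rw [← Real.rpow_add hpos]
          ring_nf

private lemma block_step (N r s : ℕ) (hs : 0 < s) (p q : ℝ) (hp : 0 < p) (hpq : p ≤ q)
    (σ : Fin N → ℝ) (hnn : ∀ i, 0 ≤ σ i) (hmono : ∀ i j : Fin N, i ≤ j → σ j ≤ σ i)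
    (j : ℕ) (hj : 2 ≤ j) :
    (∑ i ∈ blk N r s j, σ i ^ (2:ℝ)) ^ (q/2)
      ≤ (s:ℝ) ^ (-((1/p - 1/2) * q)) * (∑ i ∈ blk N r s (j-1), σ i ^ p) ^ (q/p) := by
  have hq : 0 < q := lt_of_lt_of_le hp hpq
  have hs' : (0:ℝ) < s := by exact_mod_cast hs
  set M := ∑ i ∈ blk N r s (j-1), σ i ^ p with hMdef
  have hMnn : 0 ≤ M := Finset.sum_nonneg fun i _ => Real.rpow_nonneg (hnn i) p
  by_cases hemp : blk N r s j = ∅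
  · rw [hemp]
    simp only [Finset.sum_empty]
    rw [Real.zero_rpow (by positivity)]
    positivity
  · obtain ⟨i0, hi0⟩ := Finset.nonempty_iff_ne_empty.2 hemp
    have hi0' := (Finset.mem_filter.1 hi0).2
    have hbN : r + (j-1)*s ≤ N := le_trans hi0'.1 (le_of_lt i0.isLt)
    have hcard : (blk N r s (j-1)).card = s := by
      rw [blk, card_filter_Ico N (r + (j-1-1)*s) (r + (j-1)*s) hbN]
      obtain ⟨k, rfl⟩ : ∃ k, j = k + 2 := ⟨j - 2, by omega⟩
      have e1 : k + 2 - 1 = k + 1 := by omega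
      have e2 : k + 1 - 1 = k := by omega
      rw [e1, e2]
      have h1 : (k+1)*s = k*s + s := by ring
      omega
    have havg : ∀ i ∈ blk N r s j, σ i ^ p ≤ M / s := by
      intro i hi
      rw [le_div_iff₀ hs']
      have hi' := (Finset.mem_filter.1 hi).2
      have hconst : (σ i ^ p) * s = ∑ _k ∈ blk N r s (j-1), σ i ^ p := by
        rw [Finset.sum_const, hcard, nsmul_eq_mul, mul_comm]
      rw [hconst]
      apply Finset.sum_le_sum
      intro k hk
      have hk' := (Finset.mem_filter.1 hk).2
      have hki : k ≤ i := by
        have : (k:ℕ) ≤ (i:ℕ) := le_of_lt (lt_of_lt_of_le hk'.2 hi'.1)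
        exact this
      exact Real.rpow_le_rpow (hnn i) (hmono k i hki) hp.le
    have hterm : ∀ i ∈ blk N r s j, σ i ^ (2:ℝ) ≤ (M/s) ^ (2/p) := by
      intro i hi
      have h1 : σ i ^ (2:ℝ) = (σ i ^ p) ^ (2/p) := by
        rw [← Real.rpow_mul (hnn i)]
        congr 1
        field_simp
      rw [h1]
      exact Real.rpow_le_rpow (Real.rpow_nonneg (hnn i) p) (havg i hi) (by positivity)
    have hA : ∑ i ∈ blk N r s j, σ i ^ (2:ℝ) ≤ (s:ℝ) * (M/s) ^ (2/p) := by
      calc ∑ i ∈ blk N r s j, σ i ^ (2:ℝ) ≤ ∑ _i ∈ blk N r s j, (M/s) ^ (2/p) :=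
            Finset.sum_le_sum hterm
        _ = ((blk N r s j).card : ℝ) * (M/s) ^ (2/p) := by
            rw [Finset.sum_const, nsmul_eq_mul]
        _ ≤ (s:ℝ) * (M/s) ^ (2/p) := by
            apply mul_le_mul_of_nonneg_right _ (Real.rpow_nonneg (by positivity) _)
            exact_mod_cast blk_card_le N r s j (by omega)
    calc (∑ i ∈ blk N r s j, σ i ^ (2:ℝ)) ^ (q/2)
        ≤ ((s:ℝ) * (M/s) ^ (2/p)) ^ (q/2) :=
          Real.rpow_le_rpow
            (Finset.sum_nonneg fun i _ => Real.rpow_nonneg (hnn i) 2) hA (by positivity)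
      _ = (s:ℝ)^(q/2) * (M/s) ^ ((2/p)*(q/2)) := by
          rw [Real.mul_rpow hs'.le (Real.rpow_nonneg (by positivity) _),
            ← Real.rpow_mul (by positivity)]
      _ = (s:ℝ)^(q/2) * (M/s) ^ (q/p) := by
          congr 2
          field_simp
      _ = (s:ℝ)^(q/2) * (M ^ (q/p) / (s:ℝ)^(q/p)) := by
          rw [Real.div_rpow hMnn hs'.le]
      _ = ((s:ℝ)^(q/2) * (s:ℝ)^(-(q/p))) * M^(q/p) := by
          rw [Real.rpow_neg hs'.le]
          ring
      _ = (s:ℝ)^(-((1/p-1/2)*q)) * M^(q/p) := by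
          rw [← Real.rpow_add hs']
          congr 1
          field_simp
          ring

theorem block_tail_bound (N r s : ℕ) (hs : 0 < s) (p q : ℝ)
    (hp : 0 < p) (hpq : p ≤ q) (hq1 : q ≤ 1)
    (σ : Fin N → ℝ) (hnn : ∀ i, 0 ≤ σ i)
    (hmono : ∀ i j : Fin N, i ≤ j → σ j ≤ σ i) :
    ∑ j ∈ Finset.Icc 2 N,
        (∑ i ∈ Finset.univ.filter
            (fun i : Fin N => r + (j - 1) * s ≤ (i : ℕ) ∧ (i : ℕ) < r + j * s),
          (σ i) ^ (2 : ℝ)) ^ (q / 2)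
      ≤ (s : ℝ) ^ (-((1 / p - 1 / 2) * q)) *
          (∑ i ∈ Finset.univ.filter (fun i : Fin N => r ≤ (i : ℕ)), (σ i) ^ p) ^ (q / p) := by
  have hq : 0 < q := lt_of_lt_of_le hp hpq
  have hs' : (0:ℝ) < s := by exact_mod_cast hs
  have hMnn : ∀ j : ℕ, 0 ≤ ∑ i ∈ blk N r s j, σ i ^ p :=
    fun j => Finset.sum_nonneg fun i _ => Real.rpow_nonneg (hnn i) p
  have htail : ∑ j ∈ Finset.Icc 2 N, ∑ i ∈ blk N r s (j-1), σ i ^ p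
      ≤ ∑ i ∈ Finset.univ.filter (fun i : Fin N => r ≤ (i : ℕ)), σ i ^ p := by
    have hdisj : (↑(Finset.Icc 2 N : Finset ℕ) : Set ℕ).PairwiseDisjoint
        (fun j => blk N r s (j-1)) := by
      intro a ha b hb hab
      simp only [Finset.mem_coe, Finset.mem_Icc] at ha hb
      simp only [Function.onFun, Finset.disjoint_left]
      intro i hia hib
      simp only [blk, Finset.mem_filter, Finset.mem_univ, true_and] at hia hib
      rcases lt_or_gt_of_ne hab with h | h
      · have h2 : a - 1 ≤ b - 1 - 1 := by omega
        have h3 : (a-1)*s ≤ (b-1-1)*s := Nat.mul_le_mul_right s h2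
        omega
      · have h2 : b - 1 ≤ a - 1 - 1 := by omega
        have h3 : (b-1)*s ≤ (a-1-1)*s := Nat.mul_le_mul_right s h2
        omega
    calc ∑ j ∈ Finset.Icc 2 N, ∑ i ∈ blk N r s (j-1), σ i ^ p
        = ∑ i ∈ (Finset.Icc 2 N).biUnion (fun j => blk N r s (j-1)), σ i ^ p :=
          (Finset.sum_biUnion hdisj).symm
      _ ≤ ∑ i ∈ Finset.univ.filter (fun i : Fin N => r ≤ (i : ℕ)), σ i ^ p := by
          apply Finset.sum_le_sum_of_subset_of_nonneg
          · intro i hi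
            simp only [Finset.mem_biUnion] at hi
            obtain ⟨j, _hj, hij⟩ := hi
            simp only [blk, Finset.mem_filter, Finset.mem_univ, true_and] at hij ⊢
            exact le_trans (Nat.le_add_right r _) hij.1
          · intro i _ _
            exact Real.rpow_nonneg (hnn i) p
  show ∑ j ∈ Finset.Icc 2 N, (∑ i ∈ blk N r s j, σ i ^ (2:ℝ)) ^ (q/2)
      ≤ (s : ℝ) ^ (-((1 / p - 1 / 2) * q)) *
          (∑ i ∈ Finset.univ.filter (fun i : Fin N => r ≤ (i : ℕ)), σ i ^ p) ^ (q / p)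
  calc ∑ j ∈ Finset.Icc 2 N, (∑ i ∈ blk N r s j, σ i ^ (2:ℝ)) ^ (q/2)
      ≤ ∑ j ∈ Finset.Icc 2 N,
          (s:ℝ)^(-((1/p-1/2)*q)) * (∑ i ∈ blk N r s (j-1), σ i ^ p) ^ (q/p) := by
        apply Finset.sum_le_sum
        intro j hj
        exact block_step N r s hs p q hp hpq σ hnn hmono j (Finset.mem_Icc.1 hj).1
    _ = (s:ℝ)^(-((1/p-1/2)*q)) *
          ∑ j ∈ Finset.Icc 2 N, (∑ i ∈ blk N r s (j-1), σ i ^ p) ^ (q/p) := by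
        rw [Finset.mul_sum]
    _ ≤ (s:ℝ)^(-((1/p-1/2)*q)) *
          (∑ j ∈ Finset.Icc 2 N, ∑ i ∈ blk N r s (j-1), σ i ^ p) ^ (q/p) := by
        apply mul_le_mul_of_nonneg_left _ (Real.rpow_nonneg hs'.le _)
        exact sum_rpow_le _ _ (fun j _ => hMnn _) _ ((one_le_div hp).2 hpq)
    _ ≤ (s : ℝ) ^ (-((1 / p - 1 / 2) * q)) *
          (∑ i ∈ Finset.univ.filter (fun i : Fin N => r ≤ (i : ℕ)), σ i ^ p) ^ (q / p) := by
        apply mul_le_mul_of_nonneg_left _ (Real.rpow_nonneg hs'.le _)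
        exact Real.rpow_le_rpow
          (Finset.sum_nonneg fun j _ => hMnn _) htail (by positivity)
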